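/- Let F₁ ≠ F₂ be points in the Euclidean plane, O the midpoint of F₁F₂, and let A, B, X form a linkage configuration (dist F₁ A = dist F₂ B = dist F₁ F₂ / √2, dist A B = dist F₁ F₂, A and B strictly on opposite sides of line F₁F₂, X the midpoint of AB). Suppose the lines F₁A and F₂B meet in a point P. Then dist P X = dist P O; that is, the points X and O lie on a common circle centered at P. -/

import Mathlib

open EuclideanGeometry Real

set_option maxHeartbeats 1000000

private lemma lk_scalar_main (u0 u1 v0 v1 w0 w1 t s : ℝ)
    (Ha : u0^2+u1^2 = (w0^2+w1^2)/2) (Hb : v0^2+v1^2 = (w0^2+w1^2)/2)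
    (Hab : (u0-v0-w0)^2+(u1-v1-w1)^2 = w0^2+w1^2)
    (Hl0 : t*u0 - s*v0 = w0) (Hl1 : t*u1 - s*v1 = w1)
    (hdeg : u0*v0+u1*v1 ≠ u0^2+u1^2) :
    (t*u0 - (u0+v0+w0)/2)^2 + (t*u1 - (u1+v1+w1)/2)^2
      = (t*u0 - w0/2)^2 + (t*u1 - w1/2)^2 := by
  have h6 : (t+s)*((u0^2+u1^2)-(u0*v0+u1*v1)) = (u0^2+u1^2)-(u0*v0+u1*v1) := by
    linear_combination (u0-v0)*Hl0 + (u1-v1)*Hl1 + (s-1/2)*Ha + (1/2-s)*Hb - (1/2)*Hab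
  have hne : (u0^2+u1^2)-(u0*v0+u1*v1) ≠ 0 := fun h => hdeg (by linarith)
  have hts : t + s = 1 := by
    have := mul_right_cancel₀ hne
      (by linarith : (t+s)*((u0^2+u1^2)-(u0*v0+u1*v1)) = 1*((u0^2+u1^2)-(u0*v0+u1*v1)))
    linarith
  linear_combination (-(u0+v0)/2)*Hl0 + (-(u1+v1)/2)*Hl1
    + (-(u0*v0+u1*v1+v0^2+v1^2)/2)*hts + (t/2-1/4)*Hb + (1/4-t/2)*Ha

theorem linkage_dist_P_X_eq_dist_P_O
    (F₁ F₂ A B X O P : EuclideanSpace ℝ (Fin 2))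
    (hF : F₁ ≠ F₂)
    (hO : O = midpoint ℝ F₁ F₂)
    (hA : dist F₁ A = dist F₁ F₂ / Real.sqrt 2)
    (hB : dist F₂ B = dist F₁ F₂ / Real.sqrt 2)
    (hAB : dist A B = dist F₁ F₂)
    (hSide : (affineSpan ℝ ({F₁, F₂} : Set (EuclideanSpace ℝ (Fin 2)))).SOppSide A B)
    (hX : X = midpoint ℝ A B)
    (hP₁ : P ∈ affineSpan ℝ ({F₁, A} : Set (EuclideanSpace ℝ (Fin 2))))
    (hP₂ : P ∈ affineSpan ℝ ({F₂, B} : Set (EuclideanSpace ℝ (Fin 2)))) :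
    dist P X = dist P O := by
  obtain ⟨t, ht⟩ := vadd_left_mem_affineSpan_pair.mp (by rwa [vsub_vadd P F₁])
  obtain ⟨s, hs⟩ := vadd_left_mem_affineSpan_pair.mp (by rwa [vsub_vadd P F₂])
  simp only [vsub_eq_sub] at ht hs
  -- squared distance in coordinates
  have hd : ∀ x y : EuclideanSpace ℝ (Fin 2),
      dist x y ^ 2 = (x 0 - y 0)^2 + (x 1 - y 1)^2 := by
    intro x y
    rw [EuclideanSpace.dist_eq, Real.sq_sqrt (by positivity)]
    simp [Fin.sum_univ_two, Real.dist_eq, sq_abs]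
  have ha2 : (A 0 - F₁ 0)^2 + (A 1 - F₁ 1)^2
      = ((F₂ 0 - F₁ 0)^2 + (F₂ 1 - F₁ 1)^2)/2 := by
    have h1 : dist F₁ A ^ 2 = dist F₁ F₂ ^ 2 / 2 := by
      rw [hA, div_pow, Real.sq_sqrt (by norm_num : (0:ℝ) ≤ 2)]
    rw [hd, hd] at h1
    linear_combination h1
  have hb2 : (B 0 - F₂ 0)^2 + (B 1 - F₂ 1)^2
      = ((F₂ 0 - F₁ 0)^2 + (F₂ 1 - F₁ 1)^2)/2 := by
    have h1 : dist F₂ B ^ 2 = dist F₁ F₂ ^ 2 / 2 := by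
      rw [hB, div_pow, Real.sq_sqrt (by norm_num : (0:ℝ) ≤ 2)]
    rw [hd, hd] at h1
    linear_combination h1
  have hab2 : ((A 0 - F₁ 0)-(B 0 - F₂ 0)-(F₂ 0 - F₁ 0))^2
      + ((A 1 - F₁ 1)-(B 1 - F₂ 1)-(F₂ 1 - F₁ 1))^2
      = (F₂ 0 - F₁ 0)^2 + (F₂ 1 - F₁ 1)^2 := by
    have h1 : dist A B ^ 2 = dist F₁ F₂ ^ 2 := by rw [hAB]
    rw [hd, hd] at h1
    linear_combination h1
  have ht0 : t * (A 0 - F₁ 0) = P 0 - F₁ 0 := by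
    have := congrArg (fun z : EuclideanSpace ℝ (Fin 2) => z 0) ht
    simpa using this
  have ht1 : t * (A 1 - F₁ 1) = P 1 - F₁ 1 := by
    have := congrArg (fun z : EuclideanSpace ℝ (Fin 2) => z 1) ht
    simpa using this
  have hs0 : s * (B 0 - F₂ 0) = P 0 - F₂ 0 := by
    have := congrArg (fun z : EuclideanSpace ℝ (Fin 2) => z 0) hs
    simpa using this
  have hs1 : s * (B 1 - F₂ 1) = P 1 - F₂ 1 := by
    have := congrArg (fun z : EuclideanSpace ℝ (Fin 2) => z 1) hs
    simpa using this
  have Hl0 : t * (A 0 - F₁ 0) - s * (B 0 - F₂ 0) = F₂ 0 - F₁ 0 := by linarith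
  have Hl1 : t * (A 1 - F₁ 1) - s * (B 1 - F₂ 1) = F₂ 1 - F₁ 1 := by linarith
  have hcne : (F₂ 0 - F₁ 0)^2 + (F₂ 1 - F₁ 1)^2 ≠ 0 := by
    intro h
    apply hF
    have hq0 := sq_nonneg (F₂ 0 - F₁ 0)
    have hq1 := sq_nonneg (F₂ 1 - F₁ 1)
    have e0' : (F₂ 0 - F₁ 0)^2 = 0 := by linarith
    have e1' : (F₂ 1 - F₁ 1)^2 = 0 := by linarith
    have e0 : F₁ 0 = F₂ 0 := by
      have := (pow_eq_zero_iff two_ne_zero).mp e0'; linarith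
    have e1 : F₁ 1 = F₂ 1 := by
      have := (pow_eq_zero_iff two_ne_zero).mp e1'; linarith
    ext i
    fin_cases i
    · exact e0
    · exact e1
  by_cases hdeg : (A 0 - F₁ 0)*(B 0 - F₂ 0) + (A 1 - F₁ 1)*(B 1 - F₂ 1)
      = (A 0 - F₁ 0)^2 + (A 1 - F₁ 1)^2
  · exfalso
    have hz : ((A 0 - F₁ 0) - (B 0 - F₂ 0))^2 + ((A 1 - F₁ 1) - (B 1 - F₂ 1))^2 = 0 := by
      linear_combination (-2 : ℝ)*hdeg + hb2 - ha2
    have hq0 := sq_nonneg ((A 0 - F₁ 0) - (B 0 - F₂ 0))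
    have hq1 := sq_nonneg ((A 1 - F₁ 1) - (B 1 - F₂ 1))
    have e0 : A 0 - F₁ 0 = B 0 - F₂ 0 := by
      have h2 : ((A 0 - F₁ 0) - (B 0 - F₂ 0))^2 = 0 := by linarith
      have := (pow_eq_zero_iff two_ne_zero).mp h2; linarith
    have e1 : A 1 - F₁ 1 = B 1 - F₂ 1 := by
      have h2 : ((A 1 - F₁ 1) - (B 1 - F₂ 1))^2 = 0 := by linarith
      have := (pow_eq_zero_iff two_ne_zero).mp h2; linarith
    have hw0 : (t - s) * (A 0 - F₁ 0) = F₂ 0 - F₁ 0 := by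
      linear_combination Hl0 - s*e0
    have hw1 : (t - s) * (A 1 - F₁ 1) = F₂ 1 - F₁ 1 := by
      linear_combination Hl1 - s*e1
    have htsne : t - s ≠ 0 := by
      intro h0
      apply hcne
      rw [h0, zero_mul] at hw0 hw1
      rw [← hw0, ← hw1]
      ring
    apply hSide.2.1
    have hvec : ((t - s)⁻¹ • (F₂ -ᵥ F₁) +ᵥ F₁ : EuclideanSpace ℝ (Fin 2)) = A := by
      ext i
      fin_cases i
      · simp only [vsub_eq_sub, vadd_eq_add, PiLp.add_apply, PiLp.smul_apply,
          PiLp.sub_apply, smul_eq_mul]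
        rw [show ((⟨0, by norm_num⟩ : Fin 2)) = (0 : Fin 2) from rfl]
        rw [← hw0, inv_mul_cancel_left₀ htsne]
        ring
      · simp only [vsub_eq_sub, vadd_eq_add, PiLp.add_apply, PiLp.smul_apply,
          PiLp.sub_apply, smul_eq_mul]
        rw [show ((⟨1, by norm_num⟩ : Fin 2)) = (1 : Fin 2) from rfl]
        rw [← hw1, inv_mul_cancel_left₀ htsne]
        ring
    rw [← hvec]
    exact smul_vsub_vadd_mem_affineSpan_pair _ _ _
  · have key := lk_scalar_main (A 0 - F₁ 0) (A 1 - F₁ 1) (B 0 - F₂ 0) (B 1 - F₂ 1)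
      (F₂ 0 - F₁ 0) (F₂ 1 - F₁ 1) t s ha2 hb2 hab2 Hl0 Hl1 hdeg
    have hX0 : X 0 = (A 0 + B 0)/2 := by
      rw [hX, midpoint_eq_smul_add]
      simp [PiLp.smul_apply, PiLp.add_apply]
      ring
    have hX1 : X 1 = (A 1 + B 1)/2 := by
      rw [hX, midpoint_eq_smul_add]
      simp [PiLp.smul_apply, PiLp.add_apply]
      ring
    have hO0 : O 0 = (F₁ 0 + F₂ 0)/2 := by
      rw [hO, midpoint_eq_smul_add]
      simp [PiLp.smul_apply, PiLp.add_apply]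
      ring
    have hO1 : O 1 = (F₁ 1 + F₂ 1)/2 := by
      rw [hO, midpoint_eq_smul_add]
      simp [PiLp.smul_apply, PiLp.add_apply]
      ring
    have hP0 : P 0 = t * (A 0 - F₁ 0) + F₁ 0 := by linarith
    have hP1 : P 1 = t * (A 1 - F₁ 1) + F₁ 1 := by linarith
    have hsq : dist P X ^ 2 = dist P O ^ 2 := by
      rw [hd, hd, hP0, hP1, hX0, hX1, hO0, hO1]
      linear_combination key
    have h1 := dist_nonneg (x := P) (y := X)
    have h2 := dist_nonneg (x := P) (y := O)
    nlinarith [hsq, h1, h2]
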